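/- Fix Lv ∈ ℝ^{m2×n}; set A_k = A + B2 Lv and Q_k = Q − γ² LvᵀLv; for symmetric P with S(P) invertible set A(P) = A_k + B1 K(P) and C(P) = C + D K(P). Suppose P* and P are symmetric n×n matrices with S(P*) and S(P) invertible, P* solves the inner GARE at Lv, i.e. A_kᵀP* + P* A_k + CᵀP*C + Q_k − N(P*)ᵀS(P*)⁻¹N(P*) = 0, and P' is a symmetric matrix solving 𝓛_{A(P),C(P)}(P') = −Q_k − N(P)ᵀS(P)⁻¹ R S(P)⁻¹ N(P). Then, writing Δ = P − P*, one has 𝓛_{A(P),C(P)}(P' − P*) = −𝒴(Δ), where 𝒴(Δ) = N(Δ)ᵀS(P)⁻¹N(Δ) + N(P*)ᵀS(P*)⁻¹(DᵀΔD)S(P)⁻¹N(P*) − N(P)ᵀS(P*)⁻¹(DᵀΔD)S(P)⁻¹N(P) + N(P)ᵀS(P*)⁻¹(DᵀΔD)S(P)⁻¹(DᵀΔD)S(P)⁻¹N(P) and N(Δ) = B1ᵀΔ + DᵀΔC. -/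

import Mathlib

open Matrix Filter
open scoped Kronecker

noncomputable section

/-- Frobenius norm of a real matrix. -/
def frobNorm {I J : Type*} [Fintype I] [Fintype J] (M : Matrix I J ℝ) : ℝ :=
  Real.sqrt (∑ i, ∑ j, (M i j) ^ 2)

/-- Spectral norm (induced 2-norm) of a real matrix. -/
def specNorm {I J : Type*} [Fintype I] [Fintype J] [DecidableEq J] (M : Matrix I J ℝ) : ℝ :=
  @norm _ (Matrix.instL2OpNormedAddCommGroup (m := I) (n := J) (𝕜 := ℝ)).toNorm M

/-- Every complex eigenvalue of `Iₙ ⊗ Xᵀ + Xᵀ ⊗ Iₙ + Zᵀ ⊗ Zᵀ` has negative real part. -/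
def HurwitzKron {n : ℕ} (X Z : Matrix (Fin n) (Fin n) ℝ) : Prop :=
  ∀ μ ∈ spectrum ℂ
      (((1 : Matrix (Fin n) (Fin n) ℝ) ⊗ₖ Xᵀ + Xᵀ ⊗ₖ (1 : Matrix (Fin n) (Fin n) ℝ)
          + Zᵀ ⊗ₖ Zᵀ).map (Complex.ofReal ·)),
    μ.re < 0

/-- The generalized Lyapunov operator `𝓛_{X,Z}(Y) = XᵀY + YX + ZᵀYZ`. -/
def lyapOp {n : ℕ} (X Z Y : Matrix (Fin n) (Fin n) ℝ) : Matrix (Fin n) (Fin n) ℝ :=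
  Xᵀ * Y + Y * X + Zᵀ * Y * Z

/-- A gain pair `(Lu, Lv)` is stabilizing (mean-square stability of the closed loop). -/
def Stabilizing {n m1 m2 : ℕ} (A C : Matrix (Fin n) (Fin n) ℝ)
    (B1 D : Matrix (Fin n) (Fin m1) ℝ) (B2 : Matrix (Fin n) (Fin m2) ℝ)
    (Lu : Matrix (Fin m1) (Fin n) ℝ) (Lv : Matrix (Fin m2) (Fin n) ℝ) : Prop :=
  HurwitzKron (A + B1 * Lu + B2 * Lv) (C + D * Lu)

/-- `N(P) = B1ᵀP + DᵀPC`. -/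
def Nmat {n m1 : ℕ} (C : Matrix (Fin n) (Fin n) ℝ) (B1 D : Matrix (Fin n) (Fin m1) ℝ)
    (P : Matrix (Fin n) (Fin n) ℝ) : Matrix (Fin m1) (Fin n) ℝ :=
  B1ᵀ * P + Dᵀ * P * C

/-- `S(P) = R + DᵀPD`. -/
def Smat {n m1 : ℕ} (R : Matrix (Fin m1) (Fin m1) ℝ) (D : Matrix (Fin n) (Fin m1) ℝ)
    (P : Matrix (Fin n) (Fin n) ℝ) : Matrix (Fin m1) (Fin m1) ℝ :=
  R + Dᵀ * P * D

/-- `K(P) = −S(P)⁻¹ N(P)`. -/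
def Kgain {n m1 : ℕ} (C : Matrix (Fin n) (Fin n) ℝ) (B1 D : Matrix (Fin n) (Fin m1) ℝ)
    (R : Matrix (Fin m1) (Fin m1) ℝ) (P : Matrix (Fin n) (Fin n) ℝ) :
    Matrix (Fin m1) (Fin n) ℝ :=
  -((Smat R D P)⁻¹ * Nmat C B1 D P)

/-- The symmetric block matrix `M(P)` of the paper. -/
def Mblk {n m1 m2 : ℕ} (A C Q : Matrix (Fin n) (Fin n) ℝ)
    (B1 D : Matrix (Fin n) (Fin m1) ℝ) (B2 : Matrix (Fin n) (Fin m2) ℝ)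
    (R : Matrix (Fin m1) (Fin m1) ℝ) (γ : ℝ) (P : Matrix (Fin n) (Fin n) ℝ) :
    Matrix (Fin n ⊕ Fin m1 ⊕ Fin m2) (Fin n ⊕ Fin m1 ⊕ Fin m2) ℝ :=
  Matrix.of fun i j =>
    match i, j with
    | Sum.inl i, Sum.inl j => (Q + Aᵀ * P + P * A + Cᵀ * P * C) i j
    | Sum.inl i, Sum.inr (Sum.inl j) => (Nmat C B1 D P)ᵀ i j
    | Sum.inl i, Sum.inr (Sum.inr j) => (B2ᵀ * P)ᵀ i j
    | Sum.inr (Sum.inl i), Sum.inl j => (Nmat C B1 D P) i j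
    | Sum.inr (Sum.inl i), Sum.inr (Sum.inl j) => (Smat R D P) i j
    | Sum.inr (Sum.inl _), Sum.inr (Sum.inr _) => 0
    | Sum.inr (Sum.inr i), Sum.inl j => (B2ᵀ * P) i j
    | Sum.inr (Sum.inr _), Sum.inr (Sum.inl _) => 0
    | Sum.inr (Sum.inr i), Sum.inr (Sum.inr j) =>
        ((-γ ^ 2) • (1 : Matrix (Fin m2) (Fin m2) ℝ)) i j

/-- The `uu` block of an `(n+m1+m2)×(n+m1+m2)` matrix. -/
def blkUU {n m1 m2 : ℕ}
    (M : Matrix (Fin n ⊕ Fin m1 ⊕ Fin m2) (Fin n ⊕ Fin m1 ⊕ Fin m2) ℝ) :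
    Matrix (Fin m1) (Fin m1) ℝ :=
  Matrix.of fun i j => M (Sum.inr (Sum.inl i)) (Sum.inr (Sum.inl j))

/-- The `ux` block of an `(n+m1+m2)×(n+m1+m2)` matrix. -/
def blkUX {n m1 m2 : ℕ}
    (M : Matrix (Fin n ⊕ Fin m1 ⊕ Fin m2) (Fin n ⊕ Fin m1 ⊕ Fin m2) ℝ) :
    Matrix (Fin m1) (Fin n) ℝ :=
  Matrix.of fun i j => M (Sum.inr (Sum.inl i)) (Sum.inl j)

/-- The inner GARE at the gain `Lv`:
`(A+B2 Lv)ᵀP + P(A+B2 Lv) + CᵀPC + Q − γ² LvᵀLv − N(P)ᵀS(P)⁻¹N(P) = 0`. -/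
def InnerGARE {n m1 m2 : ℕ} (A C Q : Matrix (Fin n) (Fin n) ℝ)
    (B1 D : Matrix (Fin n) (Fin m1) ℝ) (B2 : Matrix (Fin n) (Fin m2) ℝ)
    (R : Matrix (Fin m1) (Fin m1) ℝ) (γ : ℝ) (Lv : Matrix (Fin m2) (Fin n) ℝ)
    (P : Matrix (Fin n) (Fin n) ℝ) : Prop :=
  (A + B2 * Lv)ᵀ * P + P * (A + B2 * Lv) + Cᵀ * P * C + Q - (γ ^ 2) • (Lvᵀ * Lv)
    - (Nmat C B1 D P)ᵀ * (Smat R D P)⁻¹ * Nmat C B1 D P = 0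

/-- The full game algebraic Riccati equation. -/
def FullGARE {n m1 m2 : ℕ} (A C Q : Matrix (Fin n) (Fin n) ℝ)
    (B1 D : Matrix (Fin n) (Fin m1) ℝ) (B2 : Matrix (Fin n) (Fin m2) ℝ)
    (R : Matrix (Fin m1) (Fin m1) ℝ) (γ : ℝ) (P : Matrix (Fin n) (Fin n) ℝ) : Prop :=
  Aᵀ * P + P * A + Cᵀ * P * C + (γ ^ 2)⁻¹ • (P * B2 * B2ᵀ * P)
    - (Nmat C B1 D P)ᵀ * (Smat R D P)⁻¹ * Nmat C B1 D P + Q = 0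

/-- An outer iterate at `Lv`: a symmetric solution of the inner GARE at `Lv` with `S(P)`
invertible and `(K(P), Lv)` stabilizing. -/
def OuterIterate {n m1 m2 : ℕ} (A C Q : Matrix (Fin n) (Fin n) ℝ)
    (B1 D : Matrix (Fin n) (Fin m1) ℝ) (B2 : Matrix (Fin n) (Fin m2) ℝ)
    (R : Matrix (Fin m1) (Fin m1) ℝ) (γ : ℝ) (Lv : Matrix (Fin m2) (Fin n) ℝ)
    (P : Matrix (Fin n) (Fin n) ℝ) : Prop :=
  P.IsSymm ∧ IsUnit (Smat R D P).det ∧ InnerGARE A C Q B1 D B2 R γ Lv P ∧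
    Stabilizing A C B1 D B2 (Kgain C B1 D R P) Lv

/-- `P_v*` is a stabilizing solution of the full GARE. -/
def StabilizingSolution {n m1 m2 : ℕ} (A C Q : Matrix (Fin n) (Fin n) ℝ)
    (B1 D : Matrix (Fin n) (Fin m1) ℝ) (B2 : Matrix (Fin n) (Fin m2) ℝ)
    (R : Matrix (Fin m1) (Fin m1) ℝ) (γ : ℝ) (P : Matrix (Fin n) (Fin n) ℝ) : Prop :=
  P.IsSymm ∧ IsUnit (Smat R D P).det ∧ FullGARE A C Q B1 D B2 R γ P ∧
    Stabilizing A C B1 D B2 (Kgain C B1 D R P) ((γ ^ 2)⁻¹ • (B2ᵀ * P))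

set_option maxHeartbeats 2000000 in
/-- Exact-error identity for one policy-evaluation step of the inner loop. -/
theorem inner_loop_error_identity (n m1 m2 : ℕ) (hn : 0 < n) (hm1 : 0 < m1) (hm2 : 0 < m2)
    (A C Q : Matrix (Fin n) (Fin n) ℝ) (B1 D : Matrix (Fin n) (Fin m1) ℝ)
    (B2 : Matrix (Fin n) (Fin m2) ℝ) (R : Matrix (Fin m1) (Fin m1) ℝ) (γ : ℝ)
    (hQ : Q.PosSemidef) (hR : R.PosDef) (hγ : 0 < γ)
    (Lv : Matrix (Fin m2) (Fin n) ℝ)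
    (Pstar P P' : Matrix (Fin n) (Fin n) ℝ)
    (hPstar : Pstar.IsSymm) (hSstar : IsUnit (Smat R D Pstar).det)
    (hP : P.IsSymm) (hS : IsUnit (Smat R D P).det)
    (hGARE : InnerGARE A C Q B1 D B2 R γ Lv Pstar)
    (hP' : P'.IsSymm)
    (heq : lyapOp (A + B2 * Lv + B1 * Kgain C B1 D R P) (C + D * Kgain C B1 D R P) P' =
      -(Q - (γ ^ 2) • (Lvᵀ * Lv))
        - (Nmat C B1 D P)ᵀ * (Smat R D P)⁻¹ * R * (Smat R D P)⁻¹ * Nmat C B1 D P) :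
    lyapOp (A + B2 * Lv + B1 * Kgain C B1 D R P) (C + D * Kgain C B1 D R P) (P' - Pstar) =
      -((Nmat C B1 D (P - Pstar))ᵀ * (Smat R D P)⁻¹ * Nmat C B1 D (P - Pstar)
        + (Nmat C B1 D Pstar)ᵀ * (Smat R D Pstar)⁻¹ * (Dᵀ * (P - Pstar) * D)
            * (Smat R D P)⁻¹ * Nmat C B1 D Pstar
        - (Nmat C B1 D P)ᵀ * (Smat R D Pstar)⁻¹ * (Dᵀ * (P - Pstar) * D)
            * (Smat R D P)⁻¹ * Nmat C B1 D P
        + (Nmat C B1 D P)ᵀ * (Smat R D Pstar)⁻¹ * (Dᵀ * (P - Pstar) * D)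
            * (Smat R D P)⁻¹ * (Dᵀ * (P - Pstar) * D)
            * (Smat R D P)⁻¹ * Nmat C B1 D P) := by
  rw [InnerGARE] at hGARE
  set W := (γ ^ 2) • (Lvᵀ * Lv) with hW
  have hPt : Pstarᵀ = Pstar := hPstar
  have hPt2 : Pᵀ = P := hP
  have hRt : Rᵀ = R := by
    have h := hR.1
    exact (by simpa using h : R.IsSymm)
  have c1 : ∀ x : Matrix (Fin m1) (Fin n) ℝ,
      Smat R D P * ((Smat R D P)⁻¹ * x) = x :=
    fun x => Matrix.mul_nonsing_inv_cancel_left _ x hS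
  have c2 : ∀ x : Matrix (Fin m1) (Fin n) ℝ,
      (Smat R D P)⁻¹ * (Smat R D P * x) = x :=
    fun x => Matrix.nonsing_inv_mul_cancel_left _ x hS
  have c3 : ∀ x : Matrix (Fin m1) (Fin n) ℝ,
      Smat R D Pstar * ((Smat R D Pstar)⁻¹ * x) = x :=
    fun x => Matrix.mul_nonsing_inv_cancel_left _ x hSstar
  have c4 : ∀ x : Matrix (Fin m1) (Fin n) ℝ,
      (Smat R D Pstar)⁻¹ * (Smat R D Pstar * x) = x :=
    fun x => Matrix.nonsing_inv_mul_cancel_left _ x hSstar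
  have hND : Nmat C B1 D (P - Pstar) = Nmat C B1 D P - Nmat C B1 D Pstar := by
    simp only [Nmat, Matrix.mul_sub, Matrix.sub_mul]
    abel
  have hDD : Dᵀ * (P - Pstar) * D = Smat R D P - Smat R D Pstar := by
    simp only [Smat, Matrix.mul_sub, Matrix.sub_mul]
    abel
  have e1 : lyapOp (A + B2 * Lv + B1 * Kgain C B1 D R P) (C + D * Kgain C B1 D R P)
      (P' - Pstar)
      = lyapOp (A + B2 * Lv + B1 * Kgain C B1 D R P) (C + D * Kgain C B1 D R P) P'
        - lyapOp (A + B2 * Lv + B1 * Kgain C B1 D R P) (C + D * Kgain C B1 D R P) Pstar := by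
    simp only [lyapOp]
    noncomm_ring
  have e2 : lyapOp (A + B2 * Lv + B1 * Kgain C B1 D R P) (C + D * Kgain C B1 D R P) Pstar
      = -(Q - W)
        + (Nmat C B1 D Pstar)ᵀ * ((Smat R D Pstar)⁻¹ * Nmat C B1 D Pstar)
        - (Nmat C B1 D P)ᵀ * ((Smat R D P)⁻¹ * Nmat C B1 D Pstar)
        - (Nmat C B1 D Pstar)ᵀ * ((Smat R D P)⁻¹ * Nmat C B1 D P)
        + (Nmat C B1 D P)ᵀ * ((Smat R D P)⁻¹ *
            (Smat R D Pstar * ((Smat R D P)⁻¹ * Nmat C B1 D P)))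
        - (Nmat C B1 D P)ᵀ * ((Smat R D P)⁻¹ * (R * ((Smat R D P)⁻¹ * Nmat C B1 D P))) := by
    rw [← sub_eq_zero, ← hGARE]
    simp only [lyapOp, Kgain, Nmat, Smat, Matrix.transpose_add, Matrix.transpose_mul,
      Matrix.transpose_neg, Matrix.transpose_transpose, Matrix.transpose_nonsing_inv,
      hPt, hPt2, hRt, Matrix.mul_assoc]
    simp only [Matrix.mul_add, Matrix.add_mul, Matrix.mul_sub, Matrix.sub_mul,
      Matrix.neg_mul, Matrix.mul_neg, neg_neg, Matrix.mul_assoc]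
    abel
  rw [e1, heq, e2, hND, hDD]
  simp only [Matrix.transpose_sub, Matrix.mul_sub, Matrix.sub_mul, Matrix.mul_assoc,
    c1, c2, c3, c4]
  abel

end
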